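/- Induction step of steady-state secrecy (Lemma 4, Case 2): if I(S; W) = 0, H(Δ | Q) = 0, I(Q; S, W) = 0, H(S' | S, Q) = 0, and I(Q; W + Δ) = 0, then I(S'; W + Δ) = 0. -/

import Mathlib

open scoped BigOperators

/-- `p` is a probability mass function on the finite sample space `Ω`. -/
def IsPMF {Ω : Type} [Fintype Ω] (p : Ω → ℝ) : Prop :=
  (∀ ω, 0 ≤ p ω) ∧ ∑ ω : Ω, p ω = 1

open Classical in
/-- Probability of the event `E` under the pmf `p`. -/
noncomputable def probEvent {Ω : Type} [Fintype Ω] (p : Ω → ℝ) (E : Ω → Prop) : ℝ :=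
  ∑ ω : Ω, if E ω then p ω else 0

/-- Shannon entropy (base `b`) of the random variable `X` under the pmf `p`. -/
noncomputable def entH {Ω α : Type} [Fintype Ω] [Fintype α]
    (b : ℝ) (p : Ω → ℝ) (X : Ω → α) : ℝ :=
  -∑ x : α, probEvent p (fun ω => X ω = x) * Real.logb b (probEvent p (fun ω => X ω = x))

/-- Conditional entropy `H(X | Y) = H(X,Y) - H(Y)`. -/
noncomputable def condH {Ω α β : Type} [Fintype Ω] [Fintype α] [Fintype β]
    (b : ℝ) (p : Ω → ℝ) (X : Ω → α) (Y : Ω → β) : ℝ :=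
  entH b p (fun ω => (X ω, Y ω)) - entH b p Y

/-- Mutual information `I(X;Y) = H(X) + H(Y) - H(X,Y)`. -/
noncomputable def mutI {Ω α β : Type} [Fintype Ω] [Fintype α] [Fintype β]
    (b : ℝ) (p : Ω → ℝ) (X : Ω → α) (Y : Ω → β) : ℝ :=
  entH b p X + entH b p Y - entH b p (fun ω => (X ω, Y ω))

/-- Conditional mutual information `I(X;Y | Z) = H(X|Z) - H(X|Y,Z)`. -/
noncomputable def condMI {Ω α β δ : Type} [Fintype Ω] [Fintype α] [Fintype β] [Fintype δ]
    (b : ℝ) (p : Ω → ℝ) (X : Ω → α) (Y : Ω → β) (Z : Ω → δ) : ℝ :=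
  condH b p X Z - condH b p X (fun ω => (Y ω, Z ω))

/-- `X` and `Y` are independent random variables under `p`. -/
def IndepRV {Ω α β : Type} [Fintype Ω] [Fintype α] [Fintype β]
    (p : Ω → ℝ) (X : Ω → α) (Y : Ω → β) : Prop :=
  ∀ x y, probEvent p (fun ω => X ω = x ∧ Y ω = y)
    = probEvent p (fun ω => X ω = x) * probEvent p (fun ω => Y ω = y)

/-- `X` is uniformly distributed under `p`. -/
def IsUniform {Ω α : Type} [Fintype Ω] [Fintype α] (p : Ω → ℝ) (X : Ω → α) : Prop :=
  ∀ x, probEvent p (fun ω => X ω = x) = ((Fintype.card α : ℝ))⁻¹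

section Helpers
open Classical
variable {Ω : Type} [Fintype Ω] {p : Ω → ℝ}

lemma probEvent_nonneg (hp : ∀ ω, 0 ≤ p ω) (E : Ω → Prop) : 0 ≤ probEvent p E := by
  unfold probEvent
  refine Finset.sum_nonneg fun ω _ => ?_
  split <;> simp [hp ω]

lemma probEvent_congr {E E' : Ω → Prop} (h : ∀ ω, E ω ↔ E' ω) :
    probEvent p E = probEvent p E' := by
  unfold probEvent
  exact Finset.sum_congr rfl fun ω _ => by simp [h ω]

lemma probEvent_mono (hp : ∀ ω, 0 ≤ p ω) {E E' : Ω → Prop} (h : ∀ ω, E ω → E' ω) :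
    probEvent p E ≤ probEvent p E' := by
  unfold probEvent
  refine Finset.sum_le_sum fun ω _ => ?_
  by_cases hE : E ω
  · simp [hE, h ω hE]
  · simp only [hE, if_false]
    split <;> simp [hp ω]

lemma probEvent_fiber {α : Type} [Fintype α] (E : Ω → Prop) (Y : Ω → α) :
    probEvent p E = ∑ y : α, probEvent p (fun ω => E ω ∧ Y ω = y) := by
  unfold probEvent
  rw [Finset.sum_comm]
  refine Finset.sum_congr rfl fun ω _ => ?_
  by_cases hE : E ω
  · simp [hE, Finset.sum_ite_eq' Finset.univ (Y ω) (fun _ => p ω)]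
  · simp [hE]

lemma sum_probEvent_eq_one {α : Type} [Fintype α] (hp : IsPMF p) (X : Ω → α) :
    ∑ x : α, probEvent p (fun ω => X ω = x) = 1 := by
  have := probEvent_fiber (p := p) (fun _ => True) X
  simp only [true_and] at this
  rw [← this]
  unfold probEvent
  simpa using hp.2

lemma le_probEvent (hp : ∀ ω, 0 ≤ p ω) {E : Ω → Prop} {ω₀ : Ω} (h : E ω₀) :
    p ω₀ ≤ probEvent p E := by
  unfold probEvent
  have : (if E ω₀ then p ω₀ else 0) = p ω₀ := by simp [h]
  rw [← this]
  refine Finset.single_le_sum (f := fun ω => if E ω then p ω else 0) (fun ω _ => ?_) (Finset.mem_univ ω₀)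
  split <;> simp [hp ω]

lemma entH_congr {α α' : Type} [Fintype α] [Fintype α'] (b : ℝ)
    (hp : ∀ ω, 0 ≤ p ω) {X : Ω → α} {Y : Ω → α'} {e : α → α'} (he : Function.Injective e)
    (hXY : ∀ ω, p ω ≠ 0 → Y ω = e (X ω)) : entH b p Y = entH b p X := by
  have key : ∀ x, probEvent p (fun ω => Y ω = e x) = probEvent p (fun ω => X ω = x) := by
    intro x
    unfold probEvent
    refine Finset.sum_congr rfl fun ω _ => ?_
    by_cases hω : p ω = 0
    · split <;> split <;> simp [hω]
    · have : Y ω = e x ↔ X ω = x := by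
        rw [hXY ω hω]
        exact ⟨fun h => he h, fun h => by rw [h]⟩
      simp [this]
  have off : ∀ y, y ∉ Finset.univ.image e → probEvent p (fun ω => Y ω = y) = 0 := by
    intro y hy
    unfold probEvent
    refine Finset.sum_eq_zero fun ω _ => ?_
    by_cases hω : p ω = 0
    · split <;> simp [hω]
    · have : Y ω ≠ y := by
        intro h
        exact hy (Finset.mem_image.2 ⟨X ω, Finset.mem_univ _, by rw [← hXY ω hω, h]⟩)
      simp [this]
  unfold entH
  congr 1
  rw [← Finset.sum_subset (Finset.subset_univ (Finset.univ.image e))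
    (fun y _ hy => by rw [off y hy]; simp)]
  rw [Finset.sum_image (fun x _ x' _ h => he h)]
  exact Finset.sum_congr rfl fun x _ => by rw [key x]

end Helpers

section Part2
variable {Ω : Type} [Fintype Ω] {p : Ω → ℝ}

lemma condH_eq_sum {α β : Type} [Fintype α] [Fintype β] (b : ℝ) (X : Ω → α) (Y : Ω → β) :
    condH b p X Y = ∑ x : α, ∑ y : β,
      probEvent p (fun ω => X ω = x ∧ Y ω = y) *
        (Real.logb b (probEvent p (fun ω => Y ω = y)) -
          Real.logb b (probEvent p (fun ω => X ω = x ∧ Y ω = y))) := by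
  unfold condH entH
  have hpair : ∀ (c : α × β), probEvent p (fun ω => (X ω, Y ω) = c)
      = probEvent p (fun ω => X ω = c.1 ∧ Y ω = c.2) := fun c =>
    probEvent_congr fun ω => by simp [Prod.ext_iff]
  have hmarg : ∀ y, probEvent p (fun ω => Y ω = y)
      = ∑ x : α, probEvent p (fun ω => X ω = x ∧ Y ω = y) := by
    intro y
    rw [probEvent_fiber (fun ω => Y ω = y) X]
    exact Finset.sum_congr rfl fun x _ => probEvent_congr fun ω => and_comm
  rw [Fintype.sum_prod_type]
  simp only [hpair]
  have expand : (∑ x : α, ∑ y : β, probEvent p (fun ω => X ω = x ∧ Y ω = y) *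
        (Real.logb b (probEvent p (fun ω => Y ω = y)) -
          Real.logb b (probEvent p (fun ω => X ω = x ∧ Y ω = y))))
      = (∑ y : β, probEvent p (fun ω => Y ω = y) * Real.logb b (probEvent p (fun ω => Y ω = y)))
        - ∑ x : α, ∑ y : β, probEvent p (fun ω => X ω = x ∧ Y ω = y) *
            Real.logb b (probEvent p (fun ω => X ω = x ∧ Y ω = y)) := by
    simp only [mul_sub, Finset.sum_sub_distrib]
    congr 1
    rw [Finset.sum_comm]
    refine Finset.sum_congr rfl fun y _ => ?_
    rw [← Finset.sum_mul, ← hmarg y]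
  rw [expand]
  ring

lemma condH_terms_nonneg {α β : Type} [Fintype α] [Fintype β] {b : ℝ} (hb : 1 < b)
    (hp : ∀ ω, 0 ≤ p ω) (X : Ω → α) (Y : Ω → β) (x : α) (y : β) :
    0 ≤ probEvent p (fun ω => X ω = x ∧ Y ω = y) *
        (Real.logb b (probEvent p (fun ω => Y ω = y)) -
          Real.logb b (probEvent p (fun ω => X ω = x ∧ Y ω = y))) := by
  set pxy := probEvent p (fun ω => X ω = x ∧ Y ω = y) with hpxy
  by_cases h0 : pxy = 0
  · simp [h0]
  · have hpos : 0 < pxy := lt_of_le_of_ne (probEvent_nonneg hp _) (Ne.symm h0)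
    have hle : pxy ≤ probEvent p (fun ω => Y ω = y) :=
      probEvent_mono hp fun ω h => h.2
    have := Real.logb_le_logb_of_le hb hpos hle
    nlinarith

lemma exists_fn_of_condH_eq_zero {α β : Type} [Fintype α] [Fintype β] [Nonempty α]
    {b : ℝ} (hb : 1 < b) (hp : IsPMF p) {X : Ω → α} {Y : Ω → β}
    (h : condH b p X Y = 0) : ∃ f : β → α, ∀ ω, p ω ≠ 0 → X ω = f (Y ω) := by
  classical
  have hsum := (condH_eq_sum b X Y).symm.trans h
  -- each term is zero
  have hterm : ∀ x y, probEvent p (fun ω => X ω = x ∧ Y ω = y) *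
        (Real.logb b (probEvent p (fun ω => Y ω = y)) -
          Real.logb b (probEvent p (fun ω => X ω = x ∧ Y ω = y))) = 0 := by
    have h1 := (Finset.sum_eq_zero_iff_of_nonneg (fun x _ =>
      Finset.sum_nonneg fun y _ => condH_terms_nonneg hb hp.1 X Y x y)).1 hsum
    intro x y
    have h2 := (Finset.sum_eq_zero_iff_of_nonneg (fun y _ =>
      condH_terms_nonneg hb hp.1 X Y x y)).1 (h1 x (Finset.mem_univ x))
    exact h2 y (Finset.mem_univ y)
  have key : ∀ x y, probEvent p (fun ω => X ω = x ∧ Y ω = y) ≠ 0 →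
      probEvent p (fun ω => X ω = x ∧ Y ω = y) = probEvent p (fun ω => Y ω = y) := by
    intro x y hne
    have hpos : 0 < probEvent p (fun ω => X ω = x ∧ Y ω = y) :=
      lt_of_le_of_ne (probEvent_nonneg hp.1 _) (Ne.symm hne)
    have hle : probEvent p (fun ω => X ω = x ∧ Y ω = y) ≤ probEvent p (fun ω => Y ω = y) :=
      probEvent_mono hp.1 fun ω h => h.2
    by_contra hneq
    have hlt : probEvent p (fun ω => X ω = x ∧ Y ω = y) < probEvent p (fun ω => Y ω = y) :=
      lt_of_le_of_ne hle hneq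
    have := Real.logb_lt_logb hb hpos hlt
    have hz := hterm x y
    rcases mul_eq_zero.1 hz with h' | h'
    · exact hne h'
    · linarith [sub_eq_zero.1 h']
  refine ⟨fun y => if hex : ∃ x, probEvent p (fun ω => X ω = x ∧ Y ω = y) ≠ 0
    then hex.choose else Classical.arbitrary α, fun ω hω => ?_⟩
  have hmem : p ω ≤ probEvent p (fun ω' => X ω' = X ω ∧ Y ω' = Y ω) :=
    le_probEvent hp.1 ⟨rfl, rfl⟩
  have hpω : 0 < p ω := lt_of_le_of_ne (hp.1 ω) (Ne.symm hω)
  have hXne : probEvent p (fun ω' => X ω' = X ω ∧ Y ω' = Y ω) ≠ 0 := by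
    intro hc; rw [hc] at hmem; linarith
  have hex : ∃ x, probEvent p (fun ω' => X ω' = x ∧ Y ω' = Y ω) ≠ 0 := ⟨X ω, hXne⟩
  simp only [hex, dif_pos]
  set x0 := hex.choose with hx0
  have hx0ne : probEvent p (fun ω' => X ω' = x0 ∧ Y ω' = Y ω) ≠ 0 := hex.choose_spec
  by_contra hne
  have hPY : 0 < probEvent p (fun ω' => Y ω' = Y ω) :=
    lt_of_lt_of_le hpω (le_trans hmem (probEvent_mono hp.1 fun ω' h => h.2))
  have e1 := key (X ω) (Y ω) hXne
  have e2 := key x0 (Y ω) hx0ne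
  have hmarg : probEvent p (fun ω' => Y ω' = Y ω)
      = ∑ x : α, probEvent p (fun ω' => X ω' = x ∧ Y ω' = Y ω) := by
    rw [probEvent_fiber (fun ω' => Y ω' = Y ω) X]
    exact Finset.sum_congr rfl fun x _ => probEvent_congr fun ω' => and_comm
  have hsub : ({X ω, x0} : Finset α) ⊆ Finset.univ := Finset.subset_univ _
  have hpairsum : probEvent p (fun ω' => X ω' = X ω ∧ Y ω' = Y ω)
      + probEvent p (fun ω' => X ω' = x0 ∧ Y ω' = Y ω)
      ≤ probEvent p (fun ω' => Y ω' = Y ω) := by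
    rw [hmarg,
      ← Finset.sum_pair (f := fun x => probEvent p (fun ω' => X ω' = x ∧ Y ω' = Y ω))
        (fun h => hne h)]
    exact Finset.sum_le_sum_of_subset_of_nonneg hsub
      (fun x _ _ => probEvent_nonneg hp.1 _)
  rw [e1, e2] at hpairsum
  linarith

end Part2

section Part3
variable {Ω : Type} [Fintype Ω] {p : Ω → ℝ}

lemma gibbs {ι : Type} [Fintype ι] {b : ℝ} (hb : 1 < b)
    (f g : ι → ℝ) (hf : ∀ i, 0 ≤ f i) (hg : ∀ i, 0 ≤ g i)
    (hfg : ∀ i, f i ≠ 0 → g i ≠ 0) (hsum : ∑ i, g i ≤ ∑ i, f i) :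
    ∑ i, f i * (Real.logb b (g i) - Real.logb b (f i)) ≤ 0 := by
  have hlb : 0 < Real.log b := Real.log_pos hb
  have hterm : ∀ i, f i * (Real.logb b (g i) - Real.logb b (f i))
      ≤ (g i - f i) / Real.log b := by
    intro i
    by_cases h0 : f i = 0
    · rw [h0]; simp
      exact div_nonneg (hg i) (le_of_lt hlb)
    · have hfpos : 0 < f i := lt_of_le_of_ne (hf i) (Ne.symm h0)
      have hgpos : 0 < g i := lt_of_le_of_ne (hg i) (Ne.symm (hfg i h0))
      have hdiv : Real.logb b (g i) - Real.logb b (f i) = Real.log (g i / f i) / Real.log b := by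
        rw [Real.log_div (ne_of_gt hgpos) (ne_of_gt hfpos)]
        unfold Real.logb
        ring
      rw [hdiv]
      have hlog : Real.log (g i / f i) ≤ g i / f i - 1 :=
        Real.log_le_sub_one_of_pos (by positivity)
      rw [mul_div_assoc', div_le_div_iff_of_pos_right hlb]
      calc f i * Real.log (g i / f i) ≤ f i * (g i / f i - 1) := by
            exact mul_le_mul_of_nonneg_left hlog (le_of_lt hfpos)
        _ = g i - f i := by field_simp
  calc ∑ i, f i * (Real.logb b (g i) - Real.logb b (f i))
      ≤ ∑ i, (g i - f i) / Real.log b := Finset.sum_le_sum fun i _ => hterm i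
    _ = (∑ i, g i - ∑ i, f i) / Real.log b := by
        rw [← Finset.sum_div, Finset.sum_sub_distrib]
    _ ≤ 0 := by
        apply div_nonpos_of_nonpos_of_nonneg
        · linarith
        · exact le_of_lt hlb

lemma mutI_nonneg {α β : Type} [Fintype α] [Fintype β] {b : ℝ} (hb : 1 < b)
    (hp : IsPMF p) (X : Ω → α) (Y : Ω → β) : 0 ≤ mutI b p X Y := by
  classical
  set PXY := fun (c : α × β) => probEvent p (fun ω => X ω = c.1 ∧ Y ω = c.2) with hPXY
  set PX := fun x => probEvent p (fun ω => X ω = x) with hPX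
  set PY := fun y => probEvent p (fun ω => Y ω = y) with hPY
  have hpair : ∀ (c : α × β), probEvent p (fun ω => (X ω, Y ω) = c) = PXY c := fun c =>
    probEvent_congr fun ω => by simp [Prod.ext_iff]
  have hmx : ∀ x, PX x = ∑ y : β, PXY (x, y) := by
    intro x
    show probEvent p (fun ω => X ω = x) = ∑ y : β, PXY (x, y)
    rw [probEvent_fiber (fun ω => X ω = x) Y]
  have hmy : ∀ y, PY y = ∑ x : α, PXY (x, y) := by
    intro y
    show probEvent p (fun ω => Y ω = y) = ∑ x : α, PXY (x, y)
    rw [probEvent_fiber (fun ω => Y ω = y) X]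
    exact Finset.sum_congr rfl fun x _ => probEvent_congr fun ω => and_comm
  have hrw : mutI b p X Y
      = -∑ c : α × β, PXY c * (Real.logb b (PX c.1 * PY c.2) - Real.logb b (PXY c)) := by
    unfold mutI entH
    simp only [hpair]
    rw [Fintype.sum_prod_type, Fintype.sum_prod_type]
    have e1 : ∑ x : α, PX x * Real.logb b (PX x)
        = ∑ x : α, ∑ y : β, PXY (x, y) * Real.logb b (PX x) := by
      refine Finset.sum_congr rfl fun x _ => ?_
      rw [← Finset.sum_mul, ← hmx x]
    have e2 : ∑ y : β, PY y * Real.logb b (PY y)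
        = ∑ x : α, ∑ y : β, PXY (x, y) * Real.logb b (PY y) := by
      rw [Finset.sum_comm]
      refine Finset.sum_congr rfl fun y _ => ?_
      rw [← Finset.sum_mul, ← hmy y]
    have e3 : ∀ x y, PXY (x, y) * (Real.logb b (PX x * PY y) - Real.logb b (PXY (x, y)))
        = PXY (x, y) * Real.logb b (PX x) + PXY (x, y) * Real.logb b (PY y)
          - PXY (x, y) * Real.logb b (PXY (x, y)) := by
      intro x y
      by_cases h0 : PXY (x, y) = 0
      · simp [h0]
      · have hx : PX x ≠ 0 := by
          intro hc
          have : PXY (x, y) ≤ PX x := probEvent_mono hp.1 fun ω h => h.1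
          have : PXY (x, y) ≤ 0 := hc ▸ this
          exact h0 (le_antisymm this (probEvent_nonneg hp.1 _))
        have hy : PY y ≠ 0 := by
          intro hc
          have : PXY (x, y) ≤ PY y := probEvent_mono hp.1 fun ω h => h.2
          have : PXY (x, y) ≤ 0 := hc ▸ this
          exact h0 (le_antisymm this (probEvent_nonneg hp.1 _))
        rw [Real.logb_mul hx hy]
        ring
    simp only [e3]
    rw [e1, e2]
    simp only [Finset.sum_sub_distrib, Finset.sum_add_distrib]
    ring
  rw [hrw]
  have hg := gibbs (ι := α × β) hb (fun c => PXY c) (fun c => PX c.1 * PY c.2)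
    (fun c => probEvent_nonneg hp.1 _)
    (fun c => mul_nonneg (probEvent_nonneg hp.1 _) (probEvent_nonneg hp.1 _))
    (fun c h0 => by
      have hx : PXY c ≤ PX c.1 := probEvent_mono hp.1 fun ω h => h.1
      have hy : PXY c ≤ PY c.2 := probEvent_mono hp.1 fun ω h => h.2
      have hpos : 0 < PXY c := lt_of_le_of_ne (probEvent_nonneg hp.1 _) (Ne.symm h0)
      exact ne_of_gt (mul_pos (lt_of_lt_of_le hpos hx) (lt_of_lt_of_le hpos hy)))
    (by
      rw [Fintype.sum_prod_type]
      simp only [← Finset.sum_mul, ← Finset.mul_sum]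
      have hx1 : ∑ x : α, PX x = 1 := sum_probEvent_eq_one hp X
      have hy1 : ∑ y : β, PY y = 1 := sum_probEvent_eq_one hp Y
      have hxy1 : ∑ c : α × β, PXY c = 1 := by
        have h := sum_probEvent_eq_one hp (fun ω => (X ω, Y ω))
        rw [← h]
        exact Finset.sum_congr rfl fun c _ => (hpair c).symm
      rw [hx1, hy1, hxy1]
      norm_num)
  linarith

end Part3

section Part4
variable {Ω : Type} [Fintype Ω] {p : Ω → ℝ}

lemma condMI_nonneg {α β δ : Type} [Fintype α] [Fintype β] [Fintype δ] {b : ℝ} (hb : 1 < b)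
    (hp : IsPMF p) (X : Ω → α) (Y : Ω → β) (Z : Ω → δ) : 0 ≤ condMI b p X Y Z := by
  classical
  set P3 := fun (c : α × β × δ) => probEvent p (fun ω => X ω = c.1 ∧ Y ω = c.2.1 ∧ Z ω = c.2.2) with hP3
  set PXZ := fun (x : α) (z : δ) => probEvent p (fun ω => X ω = x ∧ Z ω = z) with hPXZ
  set PYZ := fun (y : β) (z : δ) => probEvent p (fun ω => Y ω = y ∧ Z ω = z) with hPYZ
  set PZ := fun (z : δ) => probEvent p (fun ω => Z ω = z) with hPZ
  have mXZ : ∀ x z, PXZ x z = ∑ y : β, P3 (x, y, z) := by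
    intro x z
    show probEvent p (fun ω => X ω = x ∧ Z ω = z) = _
    rw [probEvent_fiber (fun ω => X ω = x ∧ Z ω = z) Y]
    exact Finset.sum_congr rfl fun y _ =>
      probEvent_congr (E' := fun ω => X ω = x ∧ Y ω = y ∧ Z ω = z) fun ω => by tauto
  have mYZ : ∀ y z, PYZ y z = ∑ x : α, P3 (x, y, z) := by
    intro y z
    show probEvent p (fun ω => Y ω = y ∧ Z ω = z) = _
    rw [probEvent_fiber (fun ω => Y ω = y ∧ Z ω = z) X]
    exact Finset.sum_congr rfl fun x _ =>
      probEvent_congr (E' := fun ω => X ω = x ∧ Y ω = y ∧ Z ω = z) fun ω => by tauto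
  have mZX : ∀ z, PZ z = ∑ x : α, PXZ x z := by
    intro z
    show probEvent p (fun ω => Z ω = z) = _
    rw [probEvent_fiber (fun ω => Z ω = z) X]
    exact Finset.sum_congr rfl fun x _ =>
      probEvent_congr (E' := fun ω => X ω = x ∧ Z ω = z) fun ω => by tauto
  have mZY : ∀ z, PZ z = ∑ y : β, PYZ y z := by
    intro z
    show probEvent p (fun ω => Z ω = z) = _
    rw [probEvent_fiber (fun ω => Z ω = z) Y]
    exact Finset.sum_congr rfl fun y _ =>
      probEvent_congr (E' := fun ω => Y ω = y ∧ Z ω = z) fun ω => by tauto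
  have sum3 : ∀ f : α × β × δ → ℝ, ∑ c : α × β × δ, f c = ∑ x : α, ∑ y : β, ∑ z : δ, f (x, y, z) := by
    intro f
    rw [Fintype.sum_prod_type]
    exact Finset.sum_congr rfl fun x _ => Fintype.sum_prod_type _
  have hXYZ : entH b p (fun ω => (X ω, (Y ω, Z ω)))
      = -∑ c : α × β × δ, P3 c * Real.logb b (P3 c) := by
    unfold entH
    congr 1
    refine Finset.sum_congr rfl fun c _ => ?_
    have hc : probEvent p (fun ω => (X ω, (Y ω, Z ω)) = c) = P3 c :=
      probEvent_congr fun ω => by simp [Prod.ext_iff]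
    rw [hc]
  have hXZ : entH b p (fun ω => (X ω, Z ω))
      = -∑ c : α × β × δ, P3 c * Real.logb b (PXZ c.1 c.2.2) := by
    unfold entH
    congr 1
    conv_rhs => rw [sum3]
    rw [Fintype.sum_prod_type]
    refine Finset.sum_congr rfl fun x _ => ?_
    rw [Finset.sum_comm]
    refine Finset.sum_congr rfl fun z _ => ?_
    have hc : probEvent p (fun ω => (X ω, Z ω) = (x, z)) = PXZ x z :=
      probEvent_congr fun ω => by simp [Prod.ext_iff]
    rw [hc]; dsimp only; rw [← Finset.sum_mul, ← mXZ x z]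
  have hYZ : entH b p (fun ω => (Y ω, Z ω))
      = -∑ c : α × β × δ, P3 c * Real.logb b (PYZ c.2.1 c.2.2) := by
    unfold entH
    congr 1
    conv_rhs => rw [sum3]
    conv_rhs => rw [Finset.sum_comm]
    rw [Fintype.sum_prod_type]
    refine Finset.sum_congr rfl fun y _ => ?_
    rw [Finset.sum_comm]
    refine Finset.sum_congr rfl fun z _ => ?_
    have hc : probEvent p (fun ω => (Y ω, Z ω) = (y, z)) = PYZ y z :=
      probEvent_congr fun ω => by simp [Prod.ext_iff]
    rw [hc]; dsimp only; rw [← Finset.sum_mul, ← mYZ y z]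
  have hZ : entH b p Z = -∑ c : α × β × δ, P3 c * Real.logb b (PZ c.2.2) := by
    unfold entH
    congr 1
    conv_rhs => rw [sum3]
    dsimp only
    have r1 : ∀ x : α, ∑ y : β, ∑ z : δ, P3 (x, y, z) * Real.logb b (PZ z)
        = ∑ z : δ, (∑ y : β, P3 (x, y, z)) * Real.logb b (PZ z) := by
      intro x
      rw [Finset.sum_comm]
      exact Finset.sum_congr rfl fun z _ => by rw [Finset.sum_mul]
    rw [show (∑ x : α, ∑ y : β, ∑ z : δ, P3 (x, y, z) * Real.logb b (PZ z))
        = ∑ x : α, ∑ z : δ, (∑ y : β, P3 (x, y, z)) * Real.logb b (PZ z) from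
      Finset.sum_congr rfl fun x _ => r1 x]
    rw [Finset.sum_comm]
    refine Finset.sum_congr rfl fun z _ => ?_
    have : ∑ x : α, (∑ y : β, P3 (x, y, z)) * Real.logb b (PZ z)
        = (∑ x : α, PXZ x z) * Real.logb b (PZ z) := by
      rw [Finset.sum_mul]
      exact Finset.sum_congr rfl fun x _ => by rw [← mXZ x z]
    rw [this, ← mZX z]
  set g := fun (c : α × β × δ) => PXZ c.1 c.2.2 * PYZ c.2.1 c.2.2 / PZ c.2.2 with hgdef
  have hf : ∀ c, 0 ≤ P3 c := fun c => probEvent_nonneg hp.1 _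
  have hgnn : ∀ c, 0 ≤ g c := fun c => div_nonneg
    (mul_nonneg (probEvent_nonneg hp.1 _) (probEvent_nonneg hp.1 _)) (probEvent_nonneg hp.1 _)
  have hfg : ∀ c, P3 c ≠ 0 → g c ≠ 0 := by
    intro c h0
    have hpos : 0 < P3 c := lt_of_le_of_ne (probEvent_nonneg hp.1 _) (Ne.symm h0)
    have hxz : 0 < PXZ c.1 c.2.2 := lt_of_lt_of_le hpos
      (probEvent_mono hp.1 fun ω h => ⟨h.1, h.2.2⟩)
    have hyz : 0 < PYZ c.2.1 c.2.2 := lt_of_lt_of_le hpos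
      (probEvent_mono hp.1 fun ω h => ⟨h.2.1, h.2.2⟩)
    have hz' : 0 < PZ c.2.2 := lt_of_lt_of_le hpos
      (probEvent_mono hp.1 fun ω h => h.2.2)
    exact ne_of_gt (div_pos (mul_pos hxz hyz) hz')
  have hP3sum : ∑ c : α × β × δ, P3 c = 1 := by
    have h := sum_probEvent_eq_one hp (fun ω => (X ω, (Y ω, Z ω)))
    rw [← h]
    refine Finset.sum_congr rfl fun c _ => ?_
    exact (probEvent_congr fun ω => by simp [Prod.ext_iff]).symm
  have hgsum : ∑ c : α × β × δ, g c ≤ 1 := by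
    rw [sum3]
    have swap1 : ∀ x : α, ∑ y : β, ∑ z : δ, g (x, y, z) = ∑ z : δ, ∑ y : β, g (x, y, z) :=
      fun x => Finset.sum_comm
    rw [show (∑ x : α, ∑ y : β, ∑ z : δ, g (x, y, z))
        = ∑ x : α, ∑ z : δ, ∑ y : β, g (x, y, z) from
      Finset.sum_congr rfl fun x _ => swap1 x]
    rw [Finset.sum_comm]
    have inner : ∀ z, ∑ x : α, ∑ y : β, g (x, y, z) ≤ PZ z := by
      intro z
      have e1 : ∀ x, ∑ y : β, g (x, y, z) = PZ z * (PXZ x z / PZ z) := by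
        intro x
        calc ∑ y : β, g (x, y, z)
            = ∑ y : β, PYZ y z * (PXZ x z / PZ z) :=
              Finset.sum_congr rfl fun y _ => by show PXZ x z * PYZ y z / PZ z = _; ring
          _ = (∑ y : β, PYZ y z) * (PXZ x z / PZ z) := by rw [← Finset.sum_mul]
          _ = PZ z * (PXZ x z / PZ z) := by rw [← mZY z]
      have step : ∑ x : α, ∑ y : β, g (x, y, z) = PZ z * (PZ z / PZ z) := by
        rw [show (∑ x : α, ∑ y : β, g (x, y, z)) = ∑ x : α, PZ z * (PXZ x z / PZ z) from
          Finset.sum_congr rfl fun x _ => e1 x]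
        calc ∑ x : α, PZ z * (PXZ x z / PZ z)
            = ∑ x : α, PXZ x z * (PZ z / PZ z) := Finset.sum_congr rfl fun x _ => by ring
          _ = (∑ x : α, PXZ x z) * (PZ z / PZ z) := by rw [← Finset.sum_mul]
          _ = PZ z * (PZ z / PZ z) := by rw [← mZX z]
      rw [step]
      by_cases h0 : PZ z = 0
      · rw [h0]; simp
      · rw [div_self h0, mul_one]
    calc ∑ z : δ, ∑ x : α, ∑ y : β, g (x, y, z) ≤ ∑ z : δ, PZ z :=
          Finset.sum_le_sum fun z _ => inner z
      _ = 1 := sum_probEvent_eq_one hp Z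
  have hcond : condMI b p X Y Z = ∑ c : α × β × δ, P3 c *
      (Real.logb b (P3 c) + Real.logb b (PZ c.2.2)
        - Real.logb b (PXZ c.1 c.2.2) - Real.logb b (PYZ c.2.1 c.2.2)) := by
    unfold condMI condH
    rw [hXYZ, hXZ, hYZ, hZ]
    simp only [mul_add, mul_sub, Finset.sum_add_distrib, Finset.sum_sub_distrib]
    ring
  have term_eq : ∀ c : α × β × δ, P3 c * (Real.logb b (g c) - Real.logb b (P3 c))
      = P3 c * (Real.logb b (PXZ c.1 c.2.2) + Real.logb b (PYZ c.2.1 c.2.2)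
          - Real.logb b (PZ c.2.2) - Real.logb b (P3 c)) := by
    intro c
    by_cases h0 : P3 c = 0
    · rw [h0]; ring
    · have hpos : 0 < P3 c := lt_of_le_of_ne (probEvent_nonneg hp.1 _) (Ne.symm h0)
      have hxz : 0 < PXZ c.1 c.2.2 := lt_of_lt_of_le hpos
        (probEvent_mono hp.1 fun ω h => ⟨h.1, h.2.2⟩)
      have hyz : 0 < PYZ c.2.1 c.2.2 := lt_of_lt_of_le hpos
        (probEvent_mono hp.1 fun ω h => ⟨h.2.1, h.2.2⟩)
      have hz' : 0 < PZ c.2.2 := lt_of_lt_of_le hpos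
        (probEvent_mono hp.1 fun ω h => h.2.2)
      have hlog : Real.logb b (g c) = Real.logb b (PXZ c.1 c.2.2)
          + Real.logb b (PYZ c.2.1 c.2.2) - Real.logb b (PZ c.2.2) := by
        show Real.logb b (PXZ c.1 c.2.2 * PYZ c.2.1 c.2.2 / PZ c.2.2) = _
        rw [Real.logb_div (ne_of_gt (mul_pos hxz hyz)) (ne_of_gt hz'),
          Real.logb_mul (ne_of_gt hxz) (ne_of_gt hyz)]
      rw [hlog]
  have hG := gibbs hb P3 g hf hgnn hfg (by rw [hP3sum]; exact hgsum)
  have flip : ∑ c : α × β × δ, P3 c *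
      (Real.logb b (P3 c) + Real.logb b (PZ c.2.2)
        - Real.logb b (PXZ c.1 c.2.2) - Real.logb b (PYZ c.2.1 c.2.2))
      = -∑ c : α × β × δ, P3 c * (Real.logb b (g c) - Real.logb b (P3 c)) := by
    rw [show (∑ c : α × β × δ, P3 c * (Real.logb b (g c) - Real.logb b (P3 c)))
        = ∑ c : α × β × δ, P3 c *
            (Real.logb b (PXZ c.1 c.2.2) + Real.logb b (PYZ c.2.1 c.2.2)
              - Real.logb b (PZ c.2.2) - Real.logb b (P3 c)) from
      Finset.sum_congr rfl fun c _ => term_eq c]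
    rw [← Finset.sum_neg_distrib]
    refine Finset.sum_congr rfl fun c _ => ?_
    ring
  rw [hcond, flip]
  linarith

end Part4


/-- Induction step of steady-state secrecy (Lemma 4, Case 2): if `I(S; W) = 0`,
`H(Δ | Q) = 0`, `I(Q; S, W) = 0`, `H(S' | S, Q) = 0`, and `I(Q; W + Δ) = 0`,
then `I(S'; W + Δ) = 0`. -/
theorem steady_state_secrecy_induction_step
    {Ω F β γ δ : Type} [Fintype Ω] [Field F] [Fintype F] [DecidableEq F]
    [Fintype β] [Fintype γ] [Fintype δ]
    {L : ℕ} (b : ℝ) (hb : 1 < b) (p : Ω → ℝ) (hp : IsPMF p)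
    (W Δ : Ω → (Fin L → F)) (Q : Ω → β) (S : Ω → γ) (S' : Ω → δ)
    (h1 : mutI b p S W = 0)
    (h2 : condH b p Δ Q = 0)
    (h3 : mutI b p Q (fun ω => (S ω, W ω)) = 0)
    (h4 : condH b p S' (fun ω => (S ω, Q ω)) = 0)
    (h5 : mutI b p Q (fun ω => fun i => W ω i + Δ ω i) = 0) :
    mutI b p S' (fun ω => fun i => W ω i + Δ ω i) = 0 := by
  classical
  have hpn := hp.1
  set T : Ω → (Fin L → F) := fun ω => fun i => W ω i + Δ ω i with hTdef
  set V : Ω → γ × β := fun ω => (S ω, Q ω) with hVdef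
  have : Nonempty (Fin L → F) := ⟨fun _ => 0⟩
  obtain ⟨f, hf⟩ := exists_fn_of_condH_eq_zero hb hp h2
  have hexω : ∃ ω, p ω ≠ 0 := by
    by_contra hc
    push_neg at hc
    have hz : ∑ ω : Ω, p ω = 0 := Finset.sum_eq_zero fun ω _ => hc ω
    rw [hp.2] at hz
    norm_num at hz
  obtain ⟨ω₀, hω₀⟩ := hexω
  have : Nonempty δ := ⟨S' ω₀⟩
  obtain ⟨g, hg⟩ := exists_fn_of_condH_eq_zero hb hp h4
  -- reordering and determinism equalities between entropies
  have EA : entH b p (fun ω => (T ω, S' ω)) = entH b p (fun ω => (S' ω, T ω)) :=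
    entH_congr b hpn (e := Prod.swap) Prod.swap_injective (fun ω _ => rfl)
  have EB : entH b p (fun ω => (V ω, S' ω)) = entH b p V :=
    entH_congr b hpn (e := fun z : γ × β => (z, g z))
      (fun a b h => congrArg Prod.fst h)
      (fun ω hω => Prod.ext_iff.mpr ⟨rfl, hg ω hω⟩)
  have EC : entH b p (fun ω => (V ω, (T ω, S' ω))) = entH b p (fun ω => (V ω, T ω)) :=
    entH_congr b hpn (e := fun zt : (γ × β) × (Fin L → F) => (zt.1, (zt.2, g zt.1)))
      (fun a b h => by
        simp only [Prod.mk.injEq] at h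
        exact Prod.ext_iff.mpr ⟨h.1, h.2.1⟩)
      (fun ω hω => Prod.ext_iff.mpr ⟨rfl, Prod.ext_iff.mpr ⟨rfl, hg ω hω⟩⟩)
  have hEDinj : Function.Injective
      (fun zw : (γ × β) × (Fin L → F) => (zw.1, fun i => zw.2 i + f zw.1.2 i)) := by
    intro a b h
    simp only [Prod.mk.injEq] at h
    obtain ⟨h1', h2'⟩ := h
    refine Prod.ext_iff.mpr ⟨h1', funext fun i => ?_⟩
    have hi := congrFun h2' i
    rw [h1'] at hi
    exact add_right_cancel hi
  have ED : entH b p (fun ω => (V ω, T ω)) = entH b p (fun ω => (V ω, W ω)) :=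
    entH_congr b hpn (e := fun zw : (γ × β) × (Fin L → F) => (zw.1, fun i => zw.2 i + f zw.1.2 i))
      hEDinj
      (fun ω hω => Prod.ext_iff.mpr ⟨rfl, funext fun i => by
        show W ω i + Δ ω i = W ω i + f (Q ω) i
        rw [hf ω hω]⟩)
  have EE : entH b p (fun ω => (Q ω, T ω)) = entH b p (fun ω => (Q ω, W ω)) :=
    entH_congr b hpn (e := fun qw : β × (Fin L → F) => (qw.1, fun i => qw.2 i + f qw.1 i))
      (by
        intro a b h
        simp only [Prod.mk.injEq] at h
        obtain ⟨h1', h2'⟩ := h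
        refine Prod.ext_iff.mpr ⟨h1', funext fun i => ?_⟩
        have hi := congrFun h2' i
        rw [h1'] at hi
        exact add_right_cancel hi)
      (fun ω hω => Prod.ext_iff.mpr ⟨rfl, funext fun i => by
        show W ω i + Δ ω i = W ω i + f (Q ω) i
        rw [hf ω hω]⟩)
  have EF : entH b p (fun ω => (Q ω, (S ω, W ω))) = entH b p (fun ω => (V ω, W ω)) :=
    entH_congr b hpn (e := fun zw : (γ × β) × (Fin L → F) => (zw.1.2, (zw.1.1, zw.2)))
      (fun a b h => by
        simp only [Prod.mk.injEq] at h
        exact Prod.ext_iff.mpr ⟨Prod.ext_iff.mpr ⟨h.2.1, h.1⟩, h.2.2⟩)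
      (fun ω _ => rfl)
  have ESwap : entH b p (fun ω => (Q ω, S ω)) = entH b p V :=
    entH_congr b hpn (e := (Prod.swap : γ × β → β × γ)) Prod.swap_injective (fun ω _ => rfl)
  -- nonnegativity facts
  have n1 : 0 ≤ mutI b p Q S := mutI_nonneg hb hp Q S
  have n2 : 0 ≤ condMI b p Q W S := condMI_nonneg hb hp Q W S
  have n3 : 0 ≤ mutI b p Q W := mutI_nonneg hb hp Q W
  have n4 : 0 ≤ condMI b p Q S W := condMI_nonneg hb hp Q S W
  have n5 : 0 ≤ condMI b p V T S' := condMI_nonneg hb hp V T S'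
  have n6 : 0 ≤ mutI b p S' T := mutI_nonneg hb hp S' T
  -- chain rule identities
  have chain1 : mutI b p Q S + condMI b p Q W S = mutI b p Q (fun ω => (S ω, W ω)) := by
    have r1 : entH b p (fun ω => (W ω, S ω)) = entH b p (fun ω => (S ω, W ω)) :=
      entH_congr b hpn (e := Prod.swap) Prod.swap_injective (fun ω _ => rfl)
    have r2 : entH b p (fun ω => (Q ω, (W ω, S ω))) = entH b p (fun ω => (Q ω, (S ω, W ω))) :=
      entH_congr b hpn (e := fun c : β × (γ × (Fin L → F)) => (c.1, Prod.swap c.2))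
        (fun a b h => by
          simp only [Prod.mk.injEq, Prod.swap] at h
          exact Prod.ext_iff.mpr ⟨h.1, Prod.ext_iff.mpr ⟨h.2.2, h.2.1⟩⟩)
        (fun ω _ => rfl)
    unfold mutI condMI condH
    linarith [r1, r2]
  have chain2 : mutI b p Q W + condMI b p Q S W = mutI b p Q (fun ω => (S ω, W ω)) := by
    unfold mutI condMI condH
    ring
  have hQS : mutI b p Q S = 0 := by linarith [chain1, h3, n1, n2]
  have hQW : mutI b p Q W = 0 := by linarith [chain2, h3, n3, n4]
  have hF1 : entH b p (fun ω => (Q ω, S ω)) = entH b p Q + entH b p S := by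
    unfold mutI at hQS
    linarith
  have hF2 : entH b p (fun ω => (Q ω, W ω)) = entH b p Q + entH b p W := by
    unfold mutI at hQW
    linarith
  have h3' : entH b p (fun ω => (Q ω, (S ω, W ω)))
      = entH b p Q + entH b p (fun ω => (S ω, W ω)) := by
    unfold mutI at h3
    linarith
  have h1' : entH b p (fun ω => (S ω, W ω)) = entH b p S + entH b p W := by
    unfold mutI at h1
    linarith
  have h5' : entH b p (fun ω => (Q ω, T ω)) = entH b p Q + entH b p T := by
    unfold mutI at h5
    linarith
  have keyA : mutI b p S' T = mutI b p V T - condMI b p V T S' := by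
    unfold mutI condMI condH
    linarith [EA, EB, EC]
  have keyB : mutI b p V T = 0 := by
    unfold mutI
    linarith [ED, EF, h3', h5', EE, ESwap, hF1, hF2, h1']
  linarith [keyA, keyB, n5, n6]
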